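/- If X is a subdomain of the unit disk Δ that is not relatively compact in Δ, then there exists a sequence f_n of holomorphic maps from Δ to X such that the iterated function system F_n = f₁ ∘ ⋯ ∘ f_n has at least two distinct accumulation points (locally uniform subsequential limits). -/

import Mathlib

set_option maxHeartbeats 1000000


open Complex Metric Filter

/-- Poincaré distance on the unit disk, normalized with density 1/(1-|z|^2). -/
noncomputable def rho (z w : ℂ) : ℝ :=
  (1 / 2) * Real.log ((1 + ‖(z - w) / (1 - (starRingEnd ℂ) w * z)‖) /
    (1 - ‖(z - w) / (1 - (starRingEnd ℂ) w * z)‖))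

/-- The open unit disk Δ. -/
def unitDisk : Set ℂ := Metric.ball (0 : ℂ) 1

/-- The hyperbolic disk of center `a` and ρ-radius `r` inside Δ. -/
def hBall (a : ℂ) (r : ℝ) : Set ℂ := {z ∈ unitDisk | rho a z < r}

/-- `X` is a ρ-Bloch subdomain of Δ: the ρ-radii of hyperbolic disks contained in `X`
are bounded. -/
def IsBloch (X : Set ℂ) : Prop :=
  ∃ R : ℝ, ∀ a ∈ unitDisk, ∀ r : ℝ, hBall a r ⊆ X → r ≤ R

/-- `f` is holomorphic on Δ with values in `X`. -/
def HolOn (f : ℂ → ℂ) (X : Set ℂ) : Prop :=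
  DifferentiableOn ℂ f unitDisk ∧ Set.MapsTo f unitDisk X

/-- The compositions `F_n = f 1 ∘ f 2 ∘ ⋯ ∘ f n` (with `F_0 = id`). -/
def comps (f : ℕ → ℂ → ℂ) : ℕ → ℂ → ℂ
  | 0 => id
  | n + 1 => comps f n ∘ f (n + 1)

/-- `X` is degenerate in Δ: every locally uniform subsequential limit of the
compositions of any sequence in Hol(Δ, X) is constant on Δ. -/
def Degenerate (X : Set ℂ) : Prop :=
  ∀ f : ℕ → ℂ → ℂ, (∀ n, 1 ≤ n → HolOn (f n) X) →
    ∀ φ : ℕ → ℕ, StrictMono φ → ∀ F : ℂ → ℂ,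
      TendstoLocallyUniformlyOn (fun k => comps f (φ k)) F atTop unitDisk →
      ∀ z ∈ unitDisk, ∀ w ∈ unitDisk, F z = F w

/-- The Poincaré distance of the hyperbolic domain `X` (as the distance pushed
forward from the disk by holomorphic maps; for domains covered by Δ this agrees
with the Poincaré metric of `X`). -/
noncomputable def rhoX (X : Set ℂ) (a b : ℂ) : ℝ :=
  sInf {r : ℝ | ∃ f : ℂ → ℂ, ∃ t ∈ unitDisk,
    HolOn f X ∧ f 0 = a ∧ f t = b ∧ r = rho 0 t}

noncomputable def Complex.abs : AbsoluteValue ℂ ℝ := NormedField.toAbsoluteValue ℂ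

theorem Complex.abs_def (z : ℂ) : Complex.abs z = ‖z‖ := rfl

theorem Complex.norm_eq_abs (z : ℂ) : ‖z‖ = Complex.abs z := rfl

@[simp] theorem Complex.abs_conj (z : ℂ) : Complex.abs ((starRingEnd ℂ) z) = Complex.abs z :=
  Complex.norm_conj z

theorem Complex.sq_abs (z : ℂ) : Complex.abs z ^ 2 = Complex.normSq z := Complex.sq_norm z

@[simp] theorem Complex.abs_ofReal (r : ℝ) : Complex.abs (r : ℂ) = |r| := Complex.norm_real r

@[simp] theorem Complex.abs_I : Complex.abs Complex.I = 1 := Complex.norm_I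

@[simp] theorem Complex.abs_two : Complex.abs 2 = 2 := by
  rw [Complex.abs_def]; norm_num

theorem Complex.continuous_abs : Continuous Complex.abs := continuous_norm

noncomputable def mob (a z : ℂ) : ℂ := (a - z) / (1 - (starRingEnd ℂ) a * z)

lemma one_sub_ne {w : ℂ} (h : Complex.abs w < 1) : (1 : ℂ) - w ≠ 0 := by
  intro h0
  have : w = 1 := by linear_combination -h0
  simp [this] at h

lemma mob_den_ne {a z : ℂ} (ha : Complex.abs a < 1) (hz : Complex.abs z ≤ 1) :
    (1 : ℂ) - (starRingEnd ℂ) a * z ≠ 0 := by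
  apply one_sub_ne
  rw [map_mul, Complex.abs_conj]
  calc Complex.abs a * Complex.abs z ≤ Complex.abs a * 1 := by
        exact mul_le_mul_of_nonneg_left hz (Complex.abs.nonneg a)
    _ < 1 := by simpa using ha

lemma normSq_identity (a z : ℂ) :
    Complex.normSq (1 - (starRingEnd ℂ) a * z) - Complex.normSq (a - z)
      = (1 - Complex.normSq a) * (1 - Complex.normSq z) := by
  simp only [Complex.normSq_apply, Complex.sub_re, Complex.sub_im, Complex.mul_re,
    Complex.mul_im, Complex.one_re, Complex.one_im, Complex.conj_re, Complex.conj_im]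
  ring

lemma abs_den_ge {a z : ℂ} (hz : Complex.abs z ≤ 1) :
    1 - Complex.abs a ≤ Complex.abs (1 - (starRingEnd ℂ) a * z) := by
  have h1 : Complex.abs ((starRingEnd ℂ) a * z) ≤ Complex.abs a := by
    rw [map_mul, Complex.abs_conj]
    calc Complex.abs a * Complex.abs z ≤ Complex.abs a * 1 :=
      mul_le_mul_of_nonneg_left hz (Complex.abs.nonneg a)
      _ = Complex.abs a := by ring
  calc 1 - Complex.abs a ≤ 1 - Complex.abs ((starRingEnd ℂ) a * z) := by linarith
    _ ≤ Complex.abs (1 - (starRingEnd ℂ) a * z) := by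
        have := norm_sub_norm_le (1 : ℂ) ((starRingEnd ℂ) a * z)
        simpa [Complex.norm_eq_abs] using this

lemma mob_lt_one {a z : ℂ} (ha : Complex.abs a < 1) (hz : Complex.abs z < 1) :
    Complex.abs (mob a z) < 1 := by
  have hden := mob_den_ne ha hz.le
  have hpos : 0 < Complex.abs (1 - (starRingEnd ℂ) a * z) := Complex.abs.pos hden
  rw [mob, map_div₀, div_lt_one hpos]
  have hid := normSq_identity a z
  have h1 : Complex.normSq a < 1 := by
    rw [← Complex.sq_abs]; nlinarith [Complex.abs.nonneg a]
  have h2 : Complex.normSq z < 1 := by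
    rw [← Complex.sq_abs]; nlinarith [Complex.abs.nonneg z]
  have : Complex.normSq (a - z) < Complex.normSq (1 - (starRingEnd ℂ) a * z) := by nlinarith
  have e1 := Complex.sq_abs (a - z)
  have e2 := Complex.sq_abs (1 - (starRingEnd ℂ) a * z)
  nlinarith [Complex.abs.nonneg (a - z), hpos]

lemma mob_zero (a : ℂ) : mob a 0 = a := by simp [mob]

lemma mob_invol {a t : ℂ} (ha : Complex.abs a < 1) (ht : Complex.abs t < 1) :
    mob a (mob a t) = t := by
  have h1 : (1 : ℂ) - (starRingEnd ℂ) a * t ≠ 0 := mob_den_ne ha ht.le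
  have h2 : (1 : ℂ) - (starRingEnd ℂ) a * a ≠ 0 := mob_den_ne ha ha.le
  have h3 : (1 : ℂ) - (starRingEnd ℂ) a * mob a t ≠ 0 :=
    mob_den_ne ha (mob_lt_one ha ht).le
  simp only [mob] at h3 ⊢
  have h4 : (1 : ℂ) - (starRingEnd ℂ) a * a ≠ 0 := mob_den_ne ha ha.le
  rw [div_eq_iff h3]
  field_simp
  have h5 : (1:ℂ) - t * (starRingEnd ℂ) a ≠ 0 := by rwa [mul_comm]
  field_simp
  ring

lemma mob_self (a : ℂ) : mob a a = 0 := by simp [mob]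

lemma mob_diffOn {a : ℂ} (ha : Complex.abs a < 1) :
    DifferentiableOn ℂ (mob a) (ball (0:ℂ) 1) := by
  intro z hz
  have hz' : Complex.abs z < 1 := by simpa [Complex.abs_def] using mem_ball_zero_iff.mp hz
  apply DifferentiableAt.differentiableWithinAt
  apply DifferentiableAt.div
  · exact (differentiable_const a).differentiableAt.sub differentiable_id.differentiableAt
  · exact (differentiable_const (1:ℂ)).differentiableAt.sub
      ((differentiable_const _).differentiableAt.mul differentiable_id.differentiableAt)
  · exact mob_den_ne ha hz'.le

-- points of X far from x0 in pseudo-hyperbolic distance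
lemma far_point {X : Set ℂ} (hXs : X ⊆ ball (0:ℂ) 1) (hnc : ¬ closure X ⊆ ball (0:ℂ) 1)
    {x0 : ℂ} (hx0 : Complex.abs x0 < 1) {ρ : ℝ} (hρ0 : 0 ≤ ρ) (hρ1 : ρ < 1) :
    ∃ t ∈ X, ρ ≤ Complex.abs (mob x0 t) := by
  -- find t ∈ X with |t| ≥ 1 - ν
  have hρsq : 0 < 1 - ρ^2 := by nlinarith
  have hν : 0 < (1 - ρ^2) * (1 - Complex.abs x0) / 4 := by
    have : 0 < 1 - Complex.abs x0 := by linarith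
    positivity
  set ν := (1 - ρ^2) * (1 - Complex.abs x0) / 4 with hνdef
  obtain ⟨w, hwX, hw⟩ : ∃ w ∈ closure X, w ∉ ball (0:ℂ) 1 := by
    by_contra h
    push_neg at h
    exact hnc h
  have hw1 : 1 ≤ Complex.abs w := by
    have := mem_ball_zero_iff.not.mp hw
    simpa [Complex.abs_def] using not_lt.mp (by simpa [Complex.abs_def, mem_ball_zero_iff] using hw)
  obtain ⟨t, htX, htw'⟩ := Metric.mem_closure_iff.mp hwX ν hν
  have htw : dist t w < ν := by rwa [dist_comm] at htw'
  have ht1 : Complex.abs t < 1 := by simpa [Complex.abs_def] using mem_ball_zero_iff.mp (hXs htX)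
  have htlarge : 1 - ν ≤ Complex.abs t := by
    have : Complex.abs (t - w) < ν := by simpa [Complex.dist_eq, Complex.norm_eq_abs] using htw
    have h2 := norm_sub_norm_le w (w - t)
    simp only [Complex.norm_eq_abs] at h2
    have h3 : Complex.abs (w - t) = Complex.abs (t - w) := by
      simpa [Complex.norm_eq_abs] using norm_sub_rev w t
    have h4 : w - (w - t) = t := by ring
    rw [h4] at h2
    linarith [h2, h3 ▸ this]
  refine ⟨t, htX, ?_⟩
  -- key inequality via normSq identity
  have hid := normSq_identity x0 t
  have hden : 1 - Complex.abs x0 ≤ Complex.abs (1 - (starRingEnd ℂ) x0 * t) := abs_den_ge ht1.le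
  have hx0' : 0 ≤ Complex.abs x0 := Complex.abs.nonneg x0
  have ht' : 0 ≤ Complex.abs t := Complex.abs.nonneg t
  have e0 := Complex.sq_abs x0
  have e1 := Complex.sq_abs t
  have e2 := Complex.sq_abs (x0 - t)
  have e3 := Complex.sq_abs (1 - (starRingEnd ℂ) x0 * t)
  -- (1 - |x0|²)(1 - |t|²) ≤ (1-ρ²)(1-|x0|)²
  have hA : 1 - Complex.normSq x0 ≤ 2*(1 - Complex.abs x0) := by nlinarith
  have hB : 1 - Complex.normSq t ≤ 2*ν := by nlinarith
  have hA0 : 0 ≤ 1 - Complex.normSq x0 := by nlinarith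
  have hB0 : 0 ≤ 1 - Complex.normSq t := by nlinarith
  have key : (1 - Complex.normSq x0) * (1 - Complex.normSq t)
      ≤ (1 - ρ^2) * (1 - Complex.abs x0)^2 := by
    calc (1 - Complex.normSq x0) * (1 - Complex.normSq t)
        ≤ (2*(1 - Complex.abs x0)) * (2*ν) := by
          apply mul_le_mul hA hB hB0 (by linarith)
      _ = (1 - ρ^2) * (1 - Complex.abs x0)^2 := by rw [hνdef]; ring
  have habs : 0 ≤ Complex.abs (mob x0 t) := Complex.abs.nonneg _
  have hsq : ρ^2 ≤ (Complex.abs (mob x0 t))^2 := by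
    have hdenpos : 0 < Complex.abs (1 - (starRingEnd ℂ) x0 * t) := by linarith
    have heq : (Complex.abs (mob x0 t))^2
        = Complex.normSq (x0 - t) / Complex.normSq (1 - (starRingEnd ℂ) x0 * t) := by
      simp only [mob, map_div₀, div_pow, Complex.sq_abs]
    rw [heq]
    have hnq : 0 < Complex.normSq (1 - (starRingEnd ℂ) x0 * t) := by nlinarith [e3, hdenpos]
    rw [le_div_iff₀ hnq]
    have hd2 : (1 - Complex.abs x0)^2 ≤ Complex.normSq (1 - (starRingEnd ℂ) x0 * t) := by
      nlinarith [hden, e3, hx0]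
    nlinarith [mul_le_mul_of_nonneg_left hd2 hρsq.le, key, hid]
  exact le_of_pow_le_pow_left₀ two_ne_zero habs (by nlinarith [hsq, hρ0])

lemma cos_near_real (ζ : ℂ) :
    Complex.abs (Complex.cos ζ - ↑(Real.cos ζ.re)) ≤ Real.exp |ζ.im| - 1 := by
  set x := ζ.re
  set y := ζ.im
  have hζ : ζ = ↑x + ↑y * I := (Complex.re_add_im ζ).symm
  have hcos : Complex.cos ζ = ↑(Real.cos x) * ↑(Real.cosh y) - ↑(Real.sin x) * (↑(Real.sinh y) * I) := by
    rw [hζ, Complex.cos_add, Complex.cos_mul_I, Complex.sin_mul_I]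
    rw [← Complex.ofReal_cos, ← Complex.ofReal_sin, ← Complex.ofReal_cosh, ← Complex.ofReal_sinh]
  have : Complex.cos ζ - ↑(Real.cos x)
      = ↑(Real.cos x) * (↑(Real.cosh y) - 1) - ↑(Real.sin x) * ↑(Real.sinh y) * I := by
    rw [hcos]; ring
  rw [this]
  calc Complex.abs (↑(Real.cos x) * (↑(Real.cosh y) - 1) - ↑(Real.sin x) * ↑(Real.sinh y) * I)
      ≤ Complex.abs (↑(Real.cos x) * (↑(Real.cosh y) - 1))
        + Complex.abs (↑(Real.sin x) * ↑(Real.sinh y) * I) := by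
        apply Complex.abs.sub_le_add
    _ ≤ (Real.cosh y - 1) + |Real.sinh y| := by
        rw [map_mul, map_mul, map_mul]
        rw [show ((Real.cosh y : ℂ) - 1) = ((Real.cosh y - 1 : ℝ) : ℂ) by push_cast; ring]
        simp only [Complex.abs_ofReal, Complex.abs_I, mul_one]
        have h1 : |Real.cos x| ≤ 1 := Real.abs_cos_le_one x
        have h2 : |Real.sin x| ≤ 1 := Real.abs_sin_le_one x
        have h3 : |Real.cosh y - 1| = Real.cosh y - 1 := by
          rw [_root_.abs_of_nonneg]; linarith [Real.one_le_cosh y]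
        have hc : 0 ≤ Real.cosh y - 1 := by linarith [Real.one_le_cosh y]
        have hs : 0 ≤ |Real.sinh y| := abs_nonneg _
        calc |Real.cos x| * |Real.cosh y - 1| + |Real.sin x| * |Real.sinh y|
            ≤ 1 * |Real.cosh y - 1| + 1 * |Real.sinh y| := by
              apply add_le_add (mul_le_mul_of_nonneg_right h1 (abs_nonneg _))
                (mul_le_mul_of_nonneg_right h2 hs)
          _ = (Real.cosh y - 1) + |Real.sinh y| := by rw [h3]; ring
    _ = Real.exp |y| - 1 := by
        rw [Real.abs_sinh, ← Real.cosh_abs y, ← Real.cosh_add_sinh]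
        ring

lemma re_pos_div (z : ℂ) (hz : Complex.abs z < 1) : 0 < ((1+z)/(1-z)).re := by
  have h1 : z ≠ 1 := by intro h; rw [h] at hz; simp at hz
  have hden : (1:ℂ) - z ≠ 0 := by
    intro h0; apply h1; linear_combination -h0
  rw [Complex.div_re, ← add_div]
  have hnum : (1+z).re * (1-z).re + (1+z).im * (1-z).im = 1 - Complex.normSq z := by
    simp [Complex.normSq_apply]; ring
  rw [hnum]
  have h2 : Complex.normSq z < 1 := by
    rw [← Complex.sq_abs]; nlinarith [Complex.abs.nonneg z]
  have h3 : 0 < Complex.normSq (1 - z) := Complex.normSq_pos.mpr hden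
  exact div_pos (by linarith) h3

noncomputable def stripMap (c : ℝ) (z : ℂ) : ℂ :=
  (1 + Complex.cos ((c:ℂ) * Complex.log ((1+z)/(1-z))))/2

lemma strip_map_lemma {κ : ℝ} (hκ : 0 < κ) :
    ∃ h : ℂ → ℂ, ∃ s : ℂ, DifferentiableOn ℂ h (ball 0 1) ∧ s ∈ ball (0:ℂ) 1 ∧
      h s = 0 ∧ h 0 = 1 ∧
      ∀ z ∈ ball (0:ℂ) 1, h z ∈ thickening κ ((fun x : ℝ => (x:ℂ)) '' Set.Icc 0 1) := by
  set y0 := Real.log (1+κ) with hy0def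
  have hy0 : 0 < y0 := Real.log_pos (by linarith)
  have hpi := Real.pi_pos
  set c := y0 / (Real.pi/2) with hcdef
  have hc : 0 < c := by positivity
  have hcpi : c * (Real.pi/2) = y0 := by
    rw [hcdef]; field_simp
  -- basic facts for z in the ball
  have hden : ∀ z : ℂ, Complex.abs z < 1 → (1:ℂ) - z ≠ 0 := by
    intro z hz h0
    have : z = 1 := by linear_combination -h0
    rw [this] at hz; simp at hz
  have hdiff : DifferentiableOn ℂ (stripMap c) (ball 0 1) := by
    intro z hz
    have hz' : Complex.abs z < 1 := by
      simpa [Complex.abs_def] using mem_ball_zero_iff.mp hz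
    have hre := re_pos_div z hz'
    have hslit : (1+z)/(1-z) ∈ Complex.slitPlane := Complex.mem_slitPlane_iff.mpr (Or.inl hre)
    apply DifferentiableAt.differentiableWithinAt
    apply DifferentiableAt.div_const
    apply DifferentiableAt.const_add
    apply Complex.differentiable_cos.differentiableAt.comp
    apply DifferentiableAt.const_mul
    have hinner : DifferentiableAt ℂ (fun y : ℂ => (1+y)/(1-y)) z :=
      DifferentiableAt.div (differentiableAt_const _ |>.add differentiableAt_id)
        ((differentiableAt_const _).sub differentiableAt_id) (hden z hz')
    exact (Complex.differentiableAt_log hslit).comp z hinner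
  -- membership in the thickening
  have hmem : ∀ z ∈ ball (0:ℂ) 1, stripMap c z ∈ thickening κ ((fun x : ℝ => (x:ℂ)) '' Set.Icc 0 1) := by
    intro z hz
    have hz' : Complex.abs z < 1 := by
      simpa [Complex.abs_def] using mem_ball_zero_iff.mp hz
    have hre := re_pos_div z hz'
    set ζ := (c:ℂ) * Complex.log ((1+z)/(1-z)) with hζdef
    have him : |ζ.im| < y0 := by
      have h1 : ζ.im = c * (Complex.log ((1+z)/(1-z))).im := by
        rw [hζdef]; simp [Complex.mul_im]
      have h2 : |(Complex.log ((1+z)/(1-z))).im| < Real.pi/2 := by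
        rw [Complex.log_im]
        exact Complex.abs_arg_lt_pi_div_two_iff.mpr (Or.inl hre)
      rw [h1, abs_mul, abs_of_pos hc]
      calc c * |(Complex.log ((1+z)/(1-z))).im| < c * (Real.pi/2) :=
        (mul_lt_mul_of_pos_left h2 hc)
        _ = y0 := hcpi
    set q := (1 + Real.cos ζ.re)/2 with hqdef
    have hq0 : 0 ≤ q := by
      have := Real.neg_one_le_cos ζ.re; rw [hqdef]; linarith
    have hq1 : q ≤ 1 := by
      have := Real.cos_le_one ζ.re; rw [hqdef]; linarith
    rw [Metric.mem_thickening_iff]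
    refine ⟨(q:ℂ), ⟨q, ⟨hq0, hq1⟩, rfl⟩, ?_⟩
    have heq : stripMap c z - (q:ℂ) = (Complex.cos ζ - ↑(Real.cos ζ.re))/2 := by
      rw [stripMap, hqdef]; push_cast; ring
    rw [Complex.dist_eq, heq]
    rw [Complex.norm_eq_abs, map_div₀]
    have hb := cos_near_real ζ
    have hlt : Real.exp |ζ.im| - 1 < κ := by
      have h3 := Real.exp_lt_exp.mpr him
      have hex : Real.exp y0 = 1 + κ := by
        rw [hy0def]; exact Real.exp_log (by linarith)
      linarith
    have h2 : Complex.abs 2 = 2 := by norm_num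
    rw [h2]
    calc Complex.abs (Complex.cos ζ - ↑(Real.cos ζ.re)) / 2 ≤ (Real.exp |ζ.im| - 1)/2 := by
          linarith
      _ < κ := by linarith
  -- value at 0
  have h0 : stripMap c 0 = 1 := by
    rw [stripMap]
    norm_num [Complex.log_one, Complex.cos_zero]
  -- the point s
  set E := Real.exp (Real.pi / c) with hEdef
  have hE1 : 1 < E := Real.one_lt_exp_iff.mpr (by positivity)
  set sr := (E - 1)/(E + 1) with hsrdef
  have hsr0 : 0 ≤ sr := by
    apply div_nonneg <;> linarith
  have hsr1 : sr < 1 := by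
    rw [div_lt_one (by linarith)]; linarith
  have hsball : ((sr:ℂ)) ∈ ball (0:ℂ) 1 := by
    rw [mem_ball_zero_iff]
    simp only [Complex.norm_eq_abs, Complex.abs_ofReal]
    rw [_root_.abs_of_nonneg hsr0]; exact hsr1
  have hs : stripMap c (sr:ℂ) = 0 := by
    have hfrac : ((1:ℂ) + sr)/(1 - sr) = (E:ℂ) := by
      have h1 : (1:ℝ) - sr ≠ 0 := by linarith
      have : ((1:ℝ) + sr)/(1 - sr) = E := by
        rw [hsrdef]; field_simp; ring
      calc ((1:ℂ) + sr)/(1 - sr) = ((((1:ℝ) + sr)/(1 - sr) : ℝ) : ℂ) := by push_cast; ring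
        _ = (E:ℂ) := by rw [this]
    rw [stripMap, hfrac]
    have hlog : Complex.log (E:ℂ) = ((Real.pi / c : ℝ) : ℂ) := by
      rw [← Complex.ofReal_log (by positivity : (0:ℝ) ≤ E)]
      rw [hEdef, Real.log_exp]
    rw [hlog]
    have hc0 : (c:ℂ) ≠ 0 := by exact_mod_cast hc.ne'
    have : (c:ℂ) * ((Real.pi / c : ℝ) : ℂ) = (Real.pi : ℂ) := by
      push_cast
      field_simp
    rw [this, Complex.cos_pi]
    norm_num
  exact ⟨stripMap c, (sr:ℂ), hdiff, hsball, hs, h0, hmem⟩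

lemma eval_map_real (R : Polynomial ℝ) (x : ℝ) :
    (R.map (algebraMap ℝ ℂ)).eval (x:ℂ) = ((R.eval x : ℝ) : ℂ) := by
  rw [show ((x:ℝ):ℂ) = algebraMap ℝ ℂ x from rfl, Polynomial.eval_map,
    Polynomial.eval₂_at_apply]
  simp [Complex.coe_algebraMap]

lemma abs_add_mul_I_le (a b : ℝ) : Complex.abs (↑a + I*↑b) ≤ |a| + |b| := by
  calc Complex.abs (↑a + I*↑b) ≤ Complex.abs ↑a + Complex.abs (I*↑b) :=
        Complex.abs.add_le _ _
    _ = |a| + |b| := by simp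

lemma join_lemma {X : Set ℂ} (hXo : IsOpen X) (hXc : IsConnected X) {u v : ℂ}
    (hu : u ∈ X) (hv : v ∈ X) :
    ∃ g : ℂ → ℂ, ∃ s t : ℂ, DifferentiableOn ℂ g (ball 0 1) ∧
      Set.MapsTo g (ball (0:ℂ) 1) X ∧ s ∈ ball (0:ℂ) 1 ∧ t ∈ ball (0:ℂ) 1 ∧
      g s = u ∧ g t = v := by
  have hpc : IsPathConnected X := hXo.isConnected_iff_isPathConnected.mp hXc
  obtain ⟨p, hp⟩ := hpc.joinedIn u hu v hv
  have hrp : Set.range (p : unitInterval → ℂ) ⊆ X := by rintro _ ⟨i, rfl⟩; exact hp i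
  obtain ⟨δ, hδ, hth⟩ :=
    (isCompact_range p.continuous).exists_thickening_subset_open hXo hrp
  have hγmem : ∀ x : ℝ, p.extend x ∈ Set.range (p : unitInterval → ℂ) := by
    intro x
    have : p.extend x ∈ Set.range p.extend := Set.mem_range_self x
    rwa [Path.extend_range] at this
  -- polynomial approximations of re and im
  have hcre : ContinuousOn (fun x : ℝ => (p.extend x).re) (Set.Icc 0 1) :=
    (Complex.continuous_re.comp p.continuous_extend).continuousOn
  have hcim : ContinuousOn (fun x : ℝ => (p.extend x).im) (Set.Icc 0 1) :=
    (Complex.continuous_im.comp p.continuous_extend).continuousOn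
  obtain ⟨P, hP⟩ := exists_polynomial_near_of_continuousOn 0 1 _ hcre (δ/6) (by positivity)
  obtain ⟨Q, hQ⟩ := exists_polynomial_near_of_continuousOn 0 1 _ hcim (δ/6) (by positivity)
  set Pc : ℂ → ℂ := fun z =>
    (P.map (algebraMap ℝ ℂ)).eval z + I * (Q.map (algebraMap ℝ ℂ)).eval z with hPcdef
  have hPcreal : ∀ x : ℝ, Pc (x:ℂ) = ↑(P.eval x) + I * ↑(Q.eval x) := by
    intro x
    rw [hPcdef]
    simp only [eval_map_real]
  have hPcnear : ∀ x ∈ Set.Icc (0:ℝ) 1, Complex.abs (Pc ↑x - p.extend x) < δ/3 := by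
    intro x hx
    have h1 : Pc ↑x - p.extend x
        = ↑(P.eval x - (p.extend x).re) + I * ↑(Q.eval x - (p.extend x).im) := by
      rw [hPcreal x]
      push_cast
      linear_combination Complex.re_add_im (p.extend x)
    rw [h1]
    calc Complex.abs _ ≤ |P.eval x - (p.extend x).re| + |Q.eval x - (p.extend x).im| :=
          abs_add_mul_I_le _ _
      _ < δ/6 + δ/6 := add_lt_add (hP x hx) (hQ x hx)
      _ ≤ δ/3 := by linarith
  -- endpoint-corrected entire function
  set Qt : ℂ → ℂ := fun z => Pc z + (u - Pc 0) * (1 - z) + (v - Pc 1) * z with hQtdef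
  have hQtdiff : Differentiable ℂ Qt := by
    rw [hQtdef]
    apply Differentiable.add
    apply Differentiable.add
    · apply Differentiable.add
        (Polynomial.differentiable _)
        ((differentiable_const _).mul (Polynomial.differentiable _))
    · exact (differentiable_const _).mul ((differentiable_const _).sub differentiable_id)
    · exact (differentiable_const _).mul differentiable_id
  have hQtcont : Continuous Qt := hQtdiff.continuous
  have hext0 : p.extend 0 = u := p.extend_zero
  have hext1 : p.extend 1 = v := p.extend_one
  have h0c : ((0:ℝ):ℂ) = (0:ℂ) := by norm_num
  have h1c : ((1:ℝ):ℂ) = (1:ℂ) := by norm_num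
  have hu0 : Complex.abs (u - Pc 0) < δ/3 := by
    have := hPcnear 0 (by norm_num)
    rw [h0c, hext0] at this
    rwa [← Complex.abs.map_neg, neg_sub] at this
  have hv1 : Complex.abs (v - Pc 1) < δ/3 := by
    have := hPcnear 1 (by norm_num)
    rw [h1c, hext1] at this
    rwa [← Complex.abs.map_neg, neg_sub] at this
  have hQtnear : ∀ x ∈ Set.Icc (0:ℝ) 1, Complex.abs (Qt ↑x - p.extend x) < δ := by
    intro x hx
    obtain ⟨hx0, hx1⟩ := hx
    have h1 : Qt ↑x - p.extend x
        = (Pc ↑x - p.extend x) + (u - Pc 0) * (1 - ↑x) + (v - Pc 1) * ↑x := by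
      rw [hQtdef]; ring
    rw [h1]
    have e1 : Complex.abs ((u - Pc 0) * (1 - (x:ℂ))) ≤ Complex.abs (u - Pc 0) := by
      rw [map_mul]
      have : Complex.abs (1 - (x:ℂ)) ≤ 1 := by
        rw [show (1 - (x:ℂ)) = ((1 - x : ℝ) : ℂ) by push_cast; ring, Complex.abs_ofReal]
        rw [_root_.abs_of_nonneg (by linarith)]; linarith
      calc Complex.abs (u - Pc 0) * Complex.abs (1 - (x:ℂ))
          ≤ Complex.abs (u - Pc 0) * 1 :=
            mul_le_mul_of_nonneg_left this (Complex.abs.nonneg _)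
        _ = _ := by ring
    have e2 : Complex.abs ((v - Pc 1) * (x:ℂ)) ≤ Complex.abs (v - Pc 1) := by
      rw [map_mul]
      have : Complex.abs ((x:ℂ)) ≤ 1 := by
        rw [Complex.abs_ofReal, _root_.abs_of_nonneg hx0]; linarith
      calc Complex.abs (v - Pc 1) * Complex.abs ((x:ℂ))
          ≤ Complex.abs (v - Pc 1) * 1 :=
            mul_le_mul_of_nonneg_left this (Complex.abs.nonneg _)
        _ = _ := by ring
    calc Complex.abs _
        ≤ Complex.abs ((Pc ↑x - p.extend x) + (u - Pc 0) * (1 - ↑x))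
          + Complex.abs ((v - Pc 1) * ↑x) := Complex.abs.add_le _ _
      _ ≤ Complex.abs (Pc ↑x - p.extend x) + Complex.abs ((u - Pc 0) * (1 - ↑x))
          + Complex.abs ((v - Pc 1) * ↑x) := by
            have := Complex.abs.add_le (Pc ↑x - p.extend x) ((u - Pc 0) * (1 - ↑x))
            linarith
      _ < δ/3 + δ/3 + δ/3 := by
            have := hPcnear x ⟨hx0, hx1⟩
            have g1 := e1.trans_lt hu0
            have g2 := e2.trans_lt hv1
            linarith
      _ = δ := by ring
  -- the segment maps into X under Qt
  have hSegX : ∀ x ∈ Set.Icc (0:ℝ) 1, Qt ↑x ∈ X := by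
    intro x hx
    apply hth
    rw [Metric.mem_thickening_iff]
    exact ⟨p.extend x, hγmem x, by rw [Complex.dist_eq]; exact hQtnear x hx⟩
  -- find κ-thickening of the segment inside Qt ⁻¹' X
  have hSegcomp : IsCompact ((fun x : ℝ => (x:ℂ)) '' Set.Icc 0 1) :=
    isCompact_Icc.image Complex.continuous_ofReal
  have hTopen : IsOpen (Qt ⁻¹' X) := hXo.preimage hQtcont
  have hSegT : (fun x : ℝ => (x:ℂ)) '' Set.Icc 0 1 ⊆ Qt ⁻¹' X := by
    rintro _ ⟨x, hx, rfl⟩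
    exact hSegX x hx
  obtain ⟨κ, hκ, hκth⟩ := hSegcomp.exists_thickening_subset_open hTopen hSegT
  obtain ⟨h, s, hdiff, hsball, hs0, h01, hthick⟩ := strip_map_lemma hκ
  refine ⟨fun z => Qt (h z), s, 0, ?_, ?_, hsball, by simp [mem_ball_zero_iff], ?_, ?_⟩
  · exact DifferentiableOn.comp hQtdiff.differentiableOn hdiff (Set.mapsTo_univ _ _)
  · intro z hz
    exact hκth (hthick z hz)
  · show Qt (h s) = u
    rw [hs0, hQtdef]
    simp only []
    ring
  · show Qt (h 0) = v
    rw [h01, hQtdef]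
    simp only []
    ring

lemma step_lemma {X : Set ℂ} (hXo : IsOpen X) (hXc : IsConnected X) (hXs : X ⊆ ball (0:ℂ) 1)
    (hnc : ¬ closure X ⊆ ball (0:ℂ) 1) {x0 : ℂ} (hx0 : x0 ∈ X)
    {u w : ℂ} (hu : u ∈ X) (hw : w ∈ X) {η r : ℝ} (hη : 0 < η) (hr0 : 0 ≤ r) (hr1 : r < 1) :
    ∃ f : ℂ → ℂ, ∃ t' : ℂ, DifferentiableOn ℂ f (ball 0 1) ∧ Set.MapsTo f (ball (0:ℂ) 1) X ∧
      t' ∈ X ∧ f x0 = u ∧ f t' = w ∧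
      ∀ z : ℂ, Complex.abs z ≤ r → Complex.abs (f z - u) ≤ η := by
  have hx0b : Complex.abs x0 < 1 := by
    simpa [Complex.abs_def] using mem_ball_zero_iff.mp (hXs hx0)
  obtain ⟨g, s, t, hgdiff, hgmaps, hsball, htball, hgs, hgt⟩ := join_lemma hXo hXc hu hw
  have hsb : Complex.abs s < 1 := by simpa [Complex.abs_def] using mem_ball_zero_iff.mp hsball
  have htb : Complex.abs t < 1 := by simpa [Complex.abs_def] using mem_ball_zero_iff.mp htball
  set β := mob s t with hβdef
  have hβ : Complex.abs β < 1 := mob_lt_one hsb htb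
  have hβ0 : 0 ≤ Complex.abs β := Complex.abs.nonneg β
  -- sup of |mob x0 ·| on the closed ball of radius r
  have hcompact : IsCompact (closedBall (0:ℂ) r) := isCompact_closedBall _ _
  have hne : (closedBall (0:ℂ) r).Nonempty := ⟨0, by simp [hr0]⟩
  have hsubset : closedBall (0:ℂ) r ⊆ ball (0:ℂ) 1 := by
    intro z hz
    rw [mem_closedBall_zero_iff] at hz
    rw [mem_ball_zero_iff]
    exact lt_of_le_of_lt hz hr1
  have hcont : ContinuousOn (fun z => Complex.abs (mob x0 z)) (closedBall (0:ℂ) r) :=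
    Complex.continuous_abs.comp_continuousOn
      (((mob_diffOn hx0b).continuousOn).mono hsubset)
  obtain ⟨zstar, hzstar, hmax'⟩ := hcompact.exists_isMaxOn hne hcont
  have hmax : ∀ z ∈ closedBall (0:ℂ) r, Complex.abs (mob x0 z) ≤ Complex.abs (mob x0 zstar) :=
    fun z hz => hmax' hz
  set ρ0 := Complex.abs (mob x0 zstar) with hρ0def
  have hρ0nonneg : 0 ≤ ρ0 := Complex.abs.nonneg _
  have hρ0lt : ρ0 < 1 := by
    apply mob_lt_one hx0b
    rw [mem_closedBall_zero_iff] at hzstar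
    exact lt_of_le_of_lt (by simpa [Complex.abs_def] using hzstar) hr1
  set ρ1 := (1 + ρ0)/2 with hρ1def
  have hρ1pos : 0 < ρ1 := by rw [hρ1def]; linarith
  have hρ01 : ρ0 < ρ1 := by rw [hρ1def]; linarith
  have hρ1lt : ρ1 < 1 := by rw [hρ1def]; linarith
  -- continuity of g at s
  have hgc : ContinuousWithinAt g (ball (0:ℂ) 1) s := hgdiff.continuousOn s hsball
  obtain ⟨δg, hδg, hgball⟩ := Metric.continuousWithinAt_iff.mp hgc η hη
  -- continuity of mob s at 0
  have hmc : ContinuousWithinAt (mob s) (ball (0:ℂ) 1) 0 :=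
    (mob_diffOn hsb).continuousOn 0 (by simp)
  obtain ⟨τ, hτ, hmball⟩ := Metric.continuousWithinAt_iff.mp hmc δg hδg
  -- choose N
  have hratio : ρ0 / ρ1 < 1 := (div_lt_one hρ1pos).mpr hρ01
  have hrationn : 0 ≤ ρ0 / ρ1 := div_nonneg hρ0nonneg hρ1pos.le
  obtain ⟨N0, hN0⟩ := exists_pow_lt_of_lt_one hτ hratio
  set N := N0 + 1 with hNdef
  have hNpow : (ρ0/ρ1)^N < τ := by
    calc (ρ0/ρ1)^N = (ρ0/ρ1)^N0 * (ρ0/ρ1) := pow_succ _ _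
      _ ≤ (ρ0/ρ1)^N0 * 1 := by
          apply mul_le_mul_of_nonneg_left hratio.le (pow_nonneg hrationn _)
      _ < τ := by rw [mul_one]; exact hN0
  -- choose t'
  set ρβ := (Complex.abs β) ^ ((N:ℝ)⁻¹) with hρβdef
  have hρβlt : ρβ < 1 := by
    rw [hρβdef]
    rcases eq_or_lt_of_le hβ0 with h0 | h0
    · rw [← h0]
      rw [Real.zero_rpow (by positivity)]
      norm_num
    · exact Real.rpow_lt_one hβ0 hβ (by positivity)
  have hρβnn : 0 ≤ ρβ := Real.rpow_nonneg hβ0 _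
  obtain ⟨t', ht'X, ht'far⟩ := far_point hXs hnc hx0b
    (le_max_of_le_left hρ1pos.le) (max_lt hρ1lt hρβlt)
  set α := mob x0 t' with hαdef
  have hαρ1 : ρ1 ≤ Complex.abs α := le_trans (le_max_left _ _) ht'far
  have hαρβ : ρβ ≤ Complex.abs α := le_trans (le_max_right _ _) ht'far
  have hαpos : 0 < Complex.abs α := lt_of_lt_of_le hρ1pos hαρ1
  have hα0 : α ≠ 0 := by
    intro h; rw [h] at hαpos; simp at hαpos
  have ht'b : Complex.abs t' < 1 := by
    simpa [Complex.abs_def] using mem_ball_zero_iff.mp (hXs ht'X)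
  have hαlt : Complex.abs α < 1 := mob_lt_one hx0b ht'b
  -- |β| ≤ |α|^N
  have hβα : Complex.abs β ≤ (Complex.abs α)^N := by
    calc Complex.abs β = (ρβ)^N := by
          rw [hρβdef, ← Real.rpow_natCast ((Complex.abs β) ^ ((N:ℝ)⁻¹)) N,
            ← Real.rpow_mul hβ0]
          rw [inv_mul_cancel₀ (by positivity : (N:ℝ) ≠ 0), Real.rpow_one]
      _ ≤ (Complex.abs α)^N := pow_le_pow_left₀ hρβnn hαρβ _
  -- the map
  set f : ℂ → ℂ := fun z => g (mob s (β * (mob x0 z / α)^N)) with hfdef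
  -- inner bound
  have hinner : ∀ z : ℂ, Complex.abs z < 1 →
      Complex.abs (β * (mob x0 z / α)^N) ≤ (Complex.abs (mob x0 z))^N := by
    intro z hz
    have hm : Complex.abs (mob x0 z) < 1 := mob_lt_one hx0b hz
    rw [map_mul, map_pow, map_div₀]
    rw [div_pow]
    rw [mul_comm, division_def, mul_assoc]
    calc (Complex.abs (mob x0 z))^N * (((Complex.abs α)^N)⁻¹ * Complex.abs β)
        ≤ (Complex.abs (mob x0 z))^N * 1 := by
          have hβα' : ((Complex.abs α)^N)⁻¹ * Complex.abs β ≤ 1 := by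
            rw [inv_mul_le_iff₀ (by positivity)]
            simpa using hβα
          exact mul_le_mul_of_nonneg_left hβα' (pow_nonneg (Complex.abs.nonneg _) _)
      _ = _ := by ring
  have hinner1 : ∀ z : ℂ, Complex.abs z < 1 →
      Complex.abs (β * (mob x0 z / α)^N) < 1 := by
    intro z hz
    have hm : Complex.abs (mob x0 z) < 1 := mob_lt_one hx0b hz
    calc Complex.abs (β * (mob x0 z / α)^N) ≤ (Complex.abs (mob x0 z))^N := hinner z hz
      _ < 1 := pow_lt_one₀ (Complex.abs.nonneg _) hm (by omega)
  have hmballmem : ∀ z : ℂ, Complex.abs z < 1 →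
      mob s (β * (mob x0 z / α)^N) ∈ ball (0:ℂ) 1 := by
    intro z hz
    rw [mem_ball_zero_iff, Complex.norm_eq_abs]
    exact mob_lt_one hsb (hinner1 z hz)
  have hinnerball : ∀ z : ℂ, Complex.abs z < 1 → (β * (mob x0 z / α)^N) ∈ ball (0:ℂ) 1 := by
    intro z hz
    rw [mem_ball_zero_iff, Complex.norm_eq_abs]
    exact hinner1 z hz
  refine ⟨f, t', ?_, ?_, ht'X, ?_, ?_, ?_⟩
  · -- differentiable
    intro z hz
    have hz' : Complex.abs z < 1 := by simpa [Complex.abs_def] using mem_ball_zero_iff.mp hz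
    have h1 : DifferentiableWithinAt ℂ (fun y => β * (mob x0 y / α)^N) (ball 0 1) z :=
      ((((mob_diffOn hx0b) z hz).div_const α).pow N).const_mul β
    have h2 : DifferentiableWithinAt ℂ (fun y => mob s (β * (mob x0 y / α)^N)) (ball 0 1) z :=
      by have := ((mob_diffOn hsb) _ (hinnerball z hz')).comp z h1 (fun y hy =>
          hinnerball y (by simpa [Complex.abs_def] using mem_ball_zero_iff.mp hy)); exact this
    exact (hgdiff _ (hmballmem z hz')).comp z h2 (fun y hy =>
      hmballmem y (by simpa [Complex.abs_def] using mem_ball_zero_iff.mp hy))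
  · -- maps to X
    intro z hz
    have hz' : Complex.abs z < 1 := by simpa [Complex.abs_def] using mem_ball_zero_iff.mp hz
    exact hgmaps (hmballmem z hz')
  · -- f x0 = u
    rw [hfdef]
    simp only []
    rw [mob_self, zero_div, zero_pow (by omega : N ≠ 0), mul_zero, mob_zero, hgs]
  · -- f t' = w
    rw [hfdef]
    simp only []
    rw [div_self hα0, one_pow, mul_one, hβdef, mob_invol hsb htb, hgt]
  · -- estimate
    intro z hz
    have hz' : Complex.abs z < 1 := lt_of_le_of_lt hz hr1
    have hzball : z ∈ closedBall (0:ℂ) r := by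
      rw [mem_closedBall_zero_iff]; simpa [Complex.abs_def] using hz
    have hm0 : Complex.abs (mob x0 z) ≤ ρ0 := hmax z hzball
    have hρρ : ρ0 ≤ ρ0/ρ1 := by
      rw [le_div_iff₀ hρ1pos]
      nlinarith
    have hζ : Complex.abs (β * (mob x0 z / α)^N) < τ := by
      calc Complex.abs (β * (mob x0 z / α)^N) ≤ (Complex.abs (mob x0 z))^N := hinner z hz'
        _ ≤ (ρ0/ρ1)^N :=
            pow_le_pow_left₀ (Complex.abs.nonneg _) (le_trans hm0 hρρ) _
        _ < τ := hNpow
    have hd1 : dist (β * (mob x0 z / α)^N) (0:ℂ) < τ := by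
      rw [Complex.dist_eq, sub_zero]
      exact hζ
    have hd2 := hmball (hinnerball z hz') hd1
    rw [mob_zero] at hd2
    have hd3 := hgball (hmballmem z hz') hd2
    rw [hgs] at hd3
    rw [hfdef]
    simp only []
    rw [← Complex.norm_eq_abs, ← Complex.dist_eq]
    exact le_of_lt hd3

noncomputable def vseq (a b : ℂ) (n : ℕ) : ℂ := if n % 2 = 1 then a else b

def InvP (X : Set ℂ) (x0 a b : ℂ) (n : ℕ) (F : ℂ → ℂ) (t : ℂ) : Prop :=
  DifferentiableOn ℂ F (ball (0:ℂ) 1) ∧ Set.MapsTo F (ball (0:ℂ) 1) X ∧ t ∈ X ∧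
    F x0 = vseq a b n ∧ F t = vseq a b (n+1) ∧
    ∀ z : ℂ, Complex.abs z ≤ 1 - 1/((n:ℝ)+1) → Complex.abs (F z - vseq a b n) ≤ 2/(n:ℝ)

lemma vseq_succ_succ (a b : ℂ) (n : ℕ) : vseq a b (n+2) = vseq a b n := by
  unfold vseq
  congr 1
  simp [Nat.add_mod]

lemma base_lemma {X : Set ℂ} (hXo : IsOpen X) (hXc : IsConnected X) (hXs : X ⊆ ball (0:ℂ) 1)
    (hnc : ¬ closure X ⊆ ball (0:ℂ) 1) {x0 a b : ℂ} (hx0 : x0 ∈ X) (ha : a ∈ X) (hb : b ∈ X) :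
    ∃ F t, InvP X x0 a b 1 F t := by
  obtain ⟨f, t', hdiff, hmaps, ht'X, hfx0, hft', _⟩ :=
    step_lemma hXo hXc hXs hnc hx0 ha hb (one_pos) (le_refl (0:ℝ)) (one_pos)
  refine ⟨f, t', hdiff, hmaps, ht'X, ?_, ?_, ?_⟩
  · rw [hfx0]; rfl
  · rw [hft']; rfl
  · intro z hz
    have hz1 : Complex.abs z < 1 := by norm_num at hz ⊢; linarith
    have hfz : f z ∈ X := hmaps (by rwa [mem_ball_zero_iff, Complex.norm_eq_abs])
    have h1 : Complex.abs (f z) < 1 := by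
      simpa [Complex.abs_def] using mem_ball_zero_iff.mp (hXs hfz)
    have h2 : Complex.abs (vseq a b 1) < 1 := by
      have : vseq a b 1 = a := rfl
      rw [this]
      simpa [Complex.abs_def] using mem_ball_zero_iff.mp (hXs ha)
    have := norm_sub_le (f z) (vseq a b 1)
    simp only [Complex.norm_eq_abs] at this
    have : Complex.abs (f z - vseq a b 1) ≤ 2 := by linarith
    simpa using this
  
lemma step_lemma2 {X : Set ℂ} (hXo : IsOpen X) (hXc : IsConnected X) (hXs : X ⊆ ball (0:ℂ) 1)
    (hnc : ¬ closure X ⊆ ball (0:ℂ) 1) {x0 a b : ℂ} (hx0 : x0 ∈ X)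
    {n : ℕ} (hn : 1 ≤ n) {F : ℂ → ℂ} {t : ℂ} (hInv : InvP X x0 a b n F t) :
    ∃ f' t'', InvP X x0 a b (n+1) (F ∘ f') t'' ∧
      DifferentiableOn ℂ f' (ball (0:ℂ) 1) ∧ Set.MapsTo f' (ball (0:ℂ) 1) X := by
  obtain ⟨hFdiff, hFmaps, htX, hFx0, hFt, _⟩ := hInv
  have htball : t ∈ ball (0:ℂ) 1 := hXs htX
  have hFc : ContinuousWithinAt F (ball (0:ℂ) 1) t := hFdiff.continuousOn t htball
  have hεpos : (0:ℝ) < 2/((n:ℝ)+1) := by positivity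
  obtain ⟨η, hη, hFball⟩ := Metric.continuousWithinAt_iff.mp hFc _ hεpos
  have hrpos : (0:ℝ) ≤ 1 - 1/((n:ℝ)+2) := by
    have h1 : (1:ℝ)/((n:ℝ)+2) ≤ 1/2 := by
      apply div_le_div_of_nonneg_left one_pos.le (by norm_num)
      linarith [Nat.cast_nonneg (α := ℝ) n]
    linarith
  have hrlt : 1 - 1/((n:ℝ)+2) < 1 := by
    have h2 : (0:ℝ) < 1/((n:ℝ)+2) := by positivity
    linarith
  obtain ⟨f', t'', hf'diff, hf'maps, ht''X, hf'x0, hf't'', hest⟩ :=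
    step_lemma hXo hXc hXs hnc hx0 htX hx0 (half_pos hη) hrpos hrlt
  refine ⟨f', t'', ⟨?_, ?_, ht''X, ?_, ?_, ?_⟩, hf'diff, hf'maps⟩
  · exact hFdiff.comp hf'diff (fun z hz => hXs (hf'maps hz))
  · intro z hz
    exact hFmaps (hXs (hf'maps hz))
  · show F (f' x0) = vseq a b (n+1)
    rw [hf'x0, hFt]
  · show F (f' t'') = vseq a b (n+2)
    rw [hf't'', hFx0, vseq_succ_succ]
  · intro z hz
    have hz' : Complex.abs z ≤ 1 - 1/((n:ℝ)+2) := by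
      have : ((n+1:ℕ):ℝ) + 1 = (n:ℝ) + 2 := by push_cast; ring
      rwa [this] at hz
    have hzb : Complex.abs z < 1 := lt_of_le_of_lt hz' hrlt
    have hzball : z ∈ ball (0:ℂ) 1 := by rwa [mem_ball_zero_iff, Complex.norm_eq_abs]
    have hfz : f' z ∈ ball (0:ℂ) 1 := hXs (hf'maps hzball)
    have hdist : dist (f' z) t < η := by
      rw [Complex.dist_eq]
      calc Complex.abs (f' z - t) ≤ η/2 := hest z hz'
        _ < η := by linarith
    have := hFball hfz hdist
    rw [Complex.dist_eq, hFt, Complex.norm_eq_abs] at this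
    show Complex.abs (F (f' z) - vseq a b (n+1)) ≤ 2/(((n+1:ℕ)):ℝ)
    push_cast
    linarith

lemma tlu_lemma {f : ℕ → ℂ → ℂ} {av : ℕ → ℂ} {c : ℂ} {φ : ℕ → ℕ}
    (hφ : ∀ k, k + 1 ≤ φ k)
    (hval : ∀ k, av (φ k) = c)
    (hEst : ∀ n : ℕ, 1 ≤ n → ∀ z : ℂ, Complex.abs z ≤ 1 - 1/((n:ℝ)+1) →
      Complex.abs (comps f n z - av n) ≤ 2/(n:ℝ)) :
    TendstoLocallyUniformlyOn (fun k => comps f (φ k)) (fun _ => c) atTop (ball (0:ℂ) 1) := by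
  rw [Metric.tendstoLocallyUniformlyOn_iff]
  intro ε hε x hx
  have hxn : ‖x‖ < 1 := mem_ball_zero_iff.mp hx
  have hxnn : (0:ℝ) ≤ ‖x‖ := norm_nonneg x
  set R := (1 + ‖x‖)/2 with hRdef
  have hR1 : R < 1 := by rw [hRdef]; linarith
  have hRx : ‖x‖ < R := by rw [hRdef]; linarith
  have hrad : (0:ℝ) < (1 - ‖x‖)/2 := by linarith
  refine ⟨ball x ((1 - ‖x‖)/2), mem_nhdsWithin_of_mem_nhds (ball_mem_nhds _ hrad), ?_⟩
  set K := max (Nat.ceil ((2:ℝ)/ε)) (Nat.ceil ((1:ℝ)/(1-R))) + 1 with hKdef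
  rw [eventually_atTop]
  refine ⟨K, fun k hk => ?_⟩
  intro y hy
  have hyn : ‖y‖ ≤ R := by
    have h1 : ‖y - x‖ < (1 - ‖x‖)/2 := mem_ball_iff_norm.mp hy
    calc ‖y‖ = ‖y - x + x‖ := by ring_nf
      _ ≤ ‖y - x‖ + ‖x‖ := norm_add_le _ _
      _ ≤ R := by rw [hRdef]; linarith
  set n := φ k with hndef
  have hn1 : 1 ≤ n := le_trans (by omega) (hφ k)
  have hnk : k + 1 ≤ n := hφ k
  have hnK : (K:ℝ) ≤ (n:ℝ) := by
    have : K ≤ n := by omega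
    exact_mod_cast this
  have hceil1 : (2:ℝ)/ε < K := by
    rw [hKdef]
    push_cast
    calc (2:ℝ)/ε ≤ Nat.ceil ((2:ℝ)/ε) := Nat.le_ceil _
      _ < _ := by
          have := le_max_left (Nat.ceil ((2:ℝ)/ε)) (Nat.ceil ((1:ℝ)/(1-R)))
          push_cast
          have : ((Nat.ceil ((2:ℝ)/ε)):ℝ) ≤ ((max (Nat.ceil ((2:ℝ)/ε)) (Nat.ceil ((1:ℝ)/(1-R)))):ℝ) := by
            exact_mod_cast this
          linarith
  have hceil2 : (1:ℝ)/(1-R) < K := by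
    rw [hKdef]
    push_cast
    calc (1:ℝ)/(1-R) ≤ Nat.ceil ((1:ℝ)/(1-R)) := Nat.le_ceil _
      _ < _ := by
          have := le_max_right (Nat.ceil ((2:ℝ)/ε)) (Nat.ceil ((1:ℝ)/(1-R)))
          have : ((Nat.ceil ((1:ℝ)/(1-R))):ℝ) ≤ ((max (Nat.ceil ((2:ℝ)/ε)) (Nat.ceil ((1:ℝ)/(1-R)))):ℝ) := by
            exact_mod_cast this
          linarith
  -- conditions
  have hcond1 : 2/(n:ℝ) < ε := by
    have hn0 : (0:ℝ) < (n:ℝ) := by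
      have : (0:ℕ) < n := by omega
      exact_mod_cast this
    rw [div_lt_iff₀ hn0]
    have h2ε : (2:ℝ)/ε < (n:ℝ) := lt_of_lt_of_le hceil1 hnK
    rw [div_lt_iff₀ hε] at h2ε
    linarith [mul_comm ε (n:ℝ)]
  have hcond2 : ‖y‖ ≤ 1 - 1/((n:ℝ)+1) := by
    have hn0 : (0:ℝ) < (n:ℝ) + 1 := by positivity
    have h1R : (0:ℝ) < 1 - R := by linarith
    have h2 : (1:ℝ)/(1-R) < (n:ℝ)+1 := by
      calc (1:ℝ)/(1-R) < (K:ℝ) := hceil2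
        _ ≤ (n:ℝ) := hnK
        _ ≤ (n:ℝ)+1 := by linarith
    rw [div_lt_iff₀ h1R] at h2
    have : 1/((n:ℝ)+1) ≤ 1 - R := by
      rw [div_le_iff₀ hn0]
      nlinarith
    linarith
  have hest := hEst n hn1 y (by rwa [← Complex.norm_eq_abs])
  rw [hval k] at hest
  rw [dist_comm, Complex.dist_eq]
  exact lt_of_le_of_lt hest hcond1

theorem stmt9' (X : Set ℂ) (hXo : IsOpen X) (hXc : IsConnected X) (hXs : X ⊆ ball (0:ℂ) 1)
    (hnc : ¬ closure X ⊆ ball (0:ℂ) 1) :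
    ∃ f : ℕ → ℂ → ℂ,
      (∀ n, 1 ≤ n → DifferentiableOn ℂ (f n) (ball (0:ℂ) 1) ∧
        Set.MapsTo (f n) (ball (0:ℂ) 1) X) ∧
      ∃ φ ψ : ℕ → ℕ, StrictMono φ ∧ StrictMono ψ ∧
        ∃ F G : ℂ → ℂ,
          TendstoLocallyUniformlyOn (fun k => comps f (φ k)) F atTop (ball (0:ℂ) 1) ∧
          TendstoLocallyUniformlyOn (fun k => comps f (ψ k)) G atTop (ball (0:ℂ) 1) ∧
          ∃ z ∈ ball (0:ℂ) 1, F z ≠ G z := by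
  classical
  obtain ⟨x0, hx0⟩ := hXc.nonempty
  obtain ⟨d, hd, hdball⟩ := Metric.isOpen_iff.mp hXo x0 hx0
  set a := x0 with hadef
  set b := x0 + ((d/2 : ℝ) : ℂ) with hbdef
  have ha : a ∈ X := hx0
  have hb : b ∈ X := by
    apply hdball
    rw [mem_ball, hbdef, Complex.dist_eq]
    have : x0 + ((d/2 : ℝ) : ℂ) - x0 = ((d/2 : ℝ) : ℂ) := by ring
    rw [this, Complex.norm_eq_abs, Complex.abs_ofReal, _root_.abs_of_nonneg (by linarith)]
    linarith
  have hab : a ≠ b := by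
    rw [hadef, hbdef]
    intro h
    have : ((d/2 : ℝ) : ℂ) = 0 := by linear_combination -h
    rw [Complex.ofReal_eq_zero] at this
    linarith
  -- the recursion
  have hstep : ∀ (n : ℕ) (p : (ℂ → ℂ) × (ℂ → ℂ) × ℂ),
      ∃ q : (ℂ → ℂ) × (ℂ → ℂ) × ℂ,
        (1 ≤ n → InvP X x0 a b n p.2.1 p.2.2 →
          (InvP X x0 a b (n+1) q.2.1 q.2.2 ∧ q.2.1 = p.2.1 ∘ q.1 ∧
           DifferentiableOn ℂ q.1 (ball (0:ℂ) 1) ∧ Set.MapsTo q.1 (ball (0:ℂ) 1) X)) := by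
    intro n p
    by_cases h : 1 ≤ n ∧ InvP X x0 a b n p.2.1 p.2.2
    · obtain ⟨f', t'', hi, hd', hm'⟩ := step_lemma2 hXo hXc hXs hnc hx0 h.1 h.2
      exact ⟨(f', p.2.1 ∘ f', t''), fun _ _ => ⟨hi, rfl, hd', hm'⟩⟩
    · exact ⟨p, fun h1 h2 => absurd ⟨h1, h2⟩ h⟩
  choose nxt hnxt using hstep
  obtain ⟨F1, t1, hbase⟩ := base_lemma hXo hXc hXs hnc hx0 ha hb
  set S : ℕ → (ℂ → ℂ) × (ℂ → ℂ) × ℂ :=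
    fun n => Nat.rec (F1, F1, t1) (fun k p => nxt (k+1) p) n with hSdef
  have hSsucc : ∀ n, S (n+1) = nxt (n+1) (S n) := fun n => rfl
  have hSInv : ∀ n, InvP X x0 a b (n+1) (S n).2.1 (S n).2.2 := by
    intro n
    induction n with
    | zero => exact hbase
    | succ k ih => exact (hnxt (k+1) (S k) (by omega) ih).1
  have hSrel : ∀ k, (S (k+1)).2.1 = (S k).2.1 ∘ (S (k+1)).1 ∧
      DifferentiableOn ℂ (S (k+1)).1 (ball (0:ℂ) 1) ∧
      Set.MapsTo (S (k+1)).1 (ball (0:ℂ) 1) X :=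
    fun k => (hnxt (k+1) (S k) (by omega) (hSInv k)).2
  set f : ℕ → ℂ → ℂ := fun k => Nat.casesOn k id (fun m => (S m).1) with hfdef
  have hfsucc : ∀ m, f (m+1) = (S m).1 := fun m => rfl
  have hcomps : ∀ n, comps f (n+1) = (S n).2.1 := by
    intro n
    induction n with
    | zero =>
      show comps f 0 ∘ f 1 = (S 0).2.1
      show id ∘ F1 = F1
      exact Function.id_comp F1
    | succ k ih =>
      show comps f (k+1) ∘ f (k+2) = (S (k+1)).2.1
      rw [ih, hfsucc (k+1), (hSrel k).1]
  -- holomorphy of the pieces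
  have hhol : ∀ n, 1 ≤ n → DifferentiableOn ℂ (f n) (ball (0:ℂ) 1) ∧
      Set.MapsTo (f n) (ball (0:ℂ) 1) X := by
    intro n hn
    match n, hn with
    | 1, _ => exact ⟨hbase.1, hbase.2.1⟩
    | (k+2), _ => exact ⟨(hSrel k).2.1, (hSrel k).2.2⟩
  -- estimates
  have hEst : ∀ n : ℕ, 1 ≤ n → ∀ z : ℂ, Complex.abs z ≤ 1 - 1/((n:ℝ)+1) →
      Complex.abs (comps f n z - vseq a b n) ≤ 2/(n:ℝ) := by
    intro n hn z hz
    obtain ⟨m, rfl⟩ : ∃ m, n = m + 1 := ⟨n - 1, by omega⟩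
    rw [hcomps m]
    exact (hSInv m).2.2.2.2.2 z hz
  -- the two subsequences
  have hφmono : StrictMono (fun k => 2*k+1) := by
    intro p q hpq
    simp only []
    omega
  have hψmono : StrictMono (fun k => 2*k+2) := by
    intro p q hpq
    simp only []
    omega
  refine ⟨f, hhol, (fun k => 2*k+1), (fun k => 2*k+2), hφmono, hψmono,
    (fun _ => a), (fun _ => b), ?_, ?_, x0, hXs hx0, ?_⟩
  · apply tlu_lemma (av := vseq a b) (fun k => by omega) (fun k => ?_) hEst
    show (if (2*k+1) % 2 = 1 then a else b) = a
    rw [if_pos (by omega)]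
  · apply tlu_lemma (av := vseq a b) (fun k => by omega) (fun k => ?_) hEst
    show (if (2*k+2) % 2 = 1 then a else b) = b
    rw [if_neg (by omega)]
  · exact hab

/-- If `X ⊆ Δ` is a subdomain that is not relatively compact in Δ, then there is a
sequence of holomorphic maps Δ → X whose iterated function system has at least two
distinct locally uniform subsequential limits. -/
theorem stmt9 (X : Set ℂ) (hXo : IsOpen X) (hXc : IsConnected X) (hXs : X ⊆ unitDisk)
    (hnc : ¬ closure X ⊆ unitDisk) :
    ∃ f : ℕ → ℂ → ℂ, (∀ n, 1 ≤ n → HolOn (f n) X) ∧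
      ∃ φ ψ : ℕ → ℕ, StrictMono φ ∧ StrictMono ψ ∧
        ∃ F G : ℂ → ℂ,
          TendstoLocallyUniformlyOn (fun k => comps f (φ k)) F atTop unitDisk ∧
          TendstoLocallyUniformlyOn (fun k => comps f (ψ k)) G atTop unitDisk ∧
          ∃ z ∈ unitDisk, F z ≠ G z := by
  obtain ⟨f, hhol, φ, ψ, hφ, hψ, F, G, h1, h2, z, hz, hne⟩ := stmt9' X hXo hXc hXs hnc
  exact ⟨f, fun n hn => hhol n hn, φ, ψ, hφ, hψ, F, G, h1, h2, z, hz, hne⟩
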